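/- Let Rad be a root system in a finite-dimensional real inner product space V, let v be a regular vector, and let f be an orthogonal linear automorphism of V with f(Rad) = Rad. Then there exist a unique element w of the Weyl group W(Rad) and a unique orthogonal automorphism g of V with g(Rad) = Rad and g(R⁺(v)) = R⁺(v), such that f = w ∘ g. (That is, the full automorphism group of Rad is the semidirect product of W(Rad) and the stabilizer of the positive system R⁺(v).) -/

import Mathlib

open scoped RealInnerProductSpace

namespace PaperRS

variable {V : Type*} [NormedAddCommGroup V] [InnerProductSpace ℝ V]

/-- The reflection in a root `α`. -/
noncomputable def reflRoot (α x : V) : V := x - (2 * ⟪x, α⟫ / ⟪α, α⟫) • α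

/-- `Rad` is a (reduced, crystallographic) root system in `V`. -/
structure IsRootSystem (Rad : Set V) : Prop where
  finite : Rad.Finite
  nonzero : ∀ α ∈ Rad, α ≠ 0
  spanning : Submodule.span ℝ Rad = ⊤
  integral : ∀ α ∈ Rad, ∀ β ∈ Rad, ∃ n : ℤ, 2 * ⟪β, α⟫ / ⟪α, α⟫ = (n : ℝ)
  reflMem : ∀ α ∈ Rad, ∀ β ∈ Rad, reflRoot α β ∈ Rad
  reduced : ∀ α ∈ Rad, ∀ c : ℝ, c • α ∈ Rad → c = 1 ∨ c = -1

/-- Irreducibility: `Rad` is not the union of two nonempty mutually orthogonal subsets. -/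
def IsIrreducible (Rad : Set V) : Prop :=
  ¬ ∃ R₁ R₂ : Set V, R₁.Nonempty ∧ R₂.Nonempty ∧ Rad = R₁ ∪ R₂ ∧
      ∀ α ∈ R₁, ∀ β ∈ R₂, ⟪α, β⟫ = 0

/-- An involution of the root system `Rad`: an orthogonal linear automorphism `t` of `V`
with `t(Rad) = Rad` and `t ∘ t = id`. -/
structure IsInvolution (Rad : Set V) (t : V ≃ₗᵢ[ℝ] V) : Prop where
  maps : (⇑t) '' Rad = Rad
  invol : ∀ x : V, t (t x) = x

/-- Two roots are strongly orthogonal if neither their sum nor their difference is a root. -/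
def StronglyOrthogonal (Rad : Set V) (α β : V) : Prop :=
  α ≠ β ∧ α ≠ -β ∧ α + β ∉ Rad ∧ α - β ∉ Rad

/-- A vector is regular for `Rad` if it is orthogonal to no root. -/
def IsRegular (Rad : Set V) (v : V) : Prop := ∀ α ∈ Rad, ⟪α, v⟫ ≠ 0

/-- The positive roots determined by a regular vector `v`. -/
def posRoots (Rad : Set V) (v : V) : Set V := {α ∈ Rad | 0 < ⟪α, v⟫}

/-- The base of simple roots determined by a regular vector `v`: the positive roots which
are not sums of two positive roots. -/
def simpleBase (Rad : Set V) (v : V) : Set V :=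
  {α ∈ posRoots Rad v | ¬ ∃ β ∈ posRoots Rad v, ∃ γ ∈ posRoots Rad v, α = β + γ}

/-- A regular vector `v` is an S-chamber vector for an involution `t` if
`(α,v)·(t α,v) > 0` for every complex root `α` (i.e. every root with `t α ≠ ±α`). -/
def IsSChamber (Rad : Set V) (t : V ≃ₗᵢ[ℝ] V) (v : V) : Prop :=
  IsRegular Rad v ∧
    ∀ α ∈ Rad, t α ≠ α → t α ≠ -α → 0 < ⟪α, v⟫ * ⟪t α, v⟫

/-- `P ⊆ Rad` is parabolic if `P ∪ (-P) = Rad` and `P` is closed under root addition. -/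
def IsParabolic (Rad P : Set V) : Prop :=
  P ⊆ Rad ∧ (∀ α ∈ Rad, α ∈ P ∨ -α ∈ P) ∧
    ∀ α ∈ P, ∀ β ∈ P, α + β ∈ Rad → α + β ∈ P

/-- Composition `s_{β 0} ∘ s_{β 1} ∘ ⋯ ∘ s_{β (r-1)}` of the reflections in the roots
`β 0, …, β (r-1)`. -/
noncomputable def reflComp : (r : ℕ) → (Fin r → V) → V → V
  | 0, _ => id
  | r + 1, β => reflRoot (β 0) ∘ reflComp r (fun i => β i.succ)

set_option linter.unusedSectionVars false
set_option maxHeartbeats 1000000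

section Aux

variable [FiniteDimensional ℝ V]

/-- The reflection in `α` as a linear isometry equivalence. -/
noncomputable def sIso (α : V) : V ≃ₗᵢ[ℝ] V := Submodule.reflection ((ℝ ∙ α)ᗮ)

lemma sIso_apply (α x : V) : sIso α x = reflRoot α x := by
  by_cases hα : α = 0
  · subst hα
    have : ((ℝ ∙ (0:V))ᗮ : Submodule ℝ V) = ⊤ := by
      simp [Submodule.span_zero_singleton]
    simp only [sIso, this, reflRoot, inner_zero_right]
    rw [Submodule.reflection_mem_subspace_eq_self (Submodule.mem_top (x := x))]
    simp
  · have h0 : ⟪α, α⟫ ≠ 0 := fun h => hα (inner_self_eq_zero.mp h)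
    have hp : ((ℝ ∙ α).starProjection x : V) = (⟪α, x⟫ / (‖α‖ ^ 2 : ℝ)) • α :=
      Submodule.starProjection_singleton ℝ x
    have hsum := (ℝ ∙ α).starProjection_add_starProjection_orthogonal x
    have : ((ℝ ∙ α)ᗮ.starProjection x : V) = x - (⟪α, x⟫ / (‖α‖ ^ 2 : ℝ)) • α := by
      rw [← hp]; linear_combination (norm := module) hsum
    rw [sIso, Submodule.reflection_apply, this, reflRoot]
    have hn : (‖α‖ ^ 2 : ℝ) = ⟪α, α⟫ := (real_inner_self_eq_norm_sq α).symm
    rw [hn, real_inner_comm α x]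
    rw [two_smul]
    module


lemma sIso_sIso (α x : V) : sIso α (sIso α x) = x := Submodule.reflection_involutive _ x

lemma sIso_mul_self (α : V) : sIso α * sIso α = 1 := by
  ext x; exact sIso_sIso α x

lemma sIso_inv (α : V) : (sIso α)⁻¹ = sIso α :=
  inv_eq_of_mul_eq_one_right (sIso_mul_self α)

lemma reflRoot_self {α : V} (hα : α ≠ 0) : reflRoot α α = -α := by
  have h0 : ⟪α, α⟫ ≠ 0 := fun h => hα (inner_self_eq_zero.mp h)
  rw [reflRoot, mul_div_assoc, div_self h0, mul_one, two_smul]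
  abel

lemma reflRoot_map (g : V ≃ₗᵢ[ℝ] V) (α x : V) :
    reflRoot (g α) (g x) = g (reflRoot α x) := by
  simp only [reflRoot, LinearIsometryEquiv.inner_map_map, map_sub,
    LinearIsometryEquiv.map_smul]

lemma reflRoot_neg (α x : V) : reflRoot (-α) x = reflRoot α x := by
  simp only [reflRoot, inner_neg_right, inner_neg_left, neg_neg, smul_neg]
  rw [show 2 * -⟪x, α⟫ / ⟪α, α⟫ = -(2 * ⟪x, α⟫ / ⟪α, α⟫) by ring]
  simp

lemma sIso_neg (α : V) : sIso (-α) = sIso α := by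
  ext x; rw [sIso_apply, sIso_apply, reflRoot_neg]

lemma sIso_conj (g : V ≃ₗᵢ[ℝ] V) (α : V) :
    sIso (g α) = g * sIso α * g⁻¹ := by
  ext x
  have : x = g (g⁻¹ x) := (g.apply_symm_apply x).symm
  rw [sIso_apply]
  conv_lhs => rw [this]
  rw [reflRoot_map g α (g⁻¹ x)]
  simp [sIso_apply]


variable {Rad : Set V}

lemma IsRootSystem.neg_mem (hRS : IsRootSystem Rad) {α : V} (hα : α ∈ Rad) : -α ∈ Rad := by
  have := hRS.reflMem α hα α hα
  rwa [reflRoot_self (hRS.nonzero α hα)] at this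

lemma IsRootSystem.inner_self_pos (hRS : IsRootSystem Rad) {α : V} (hα : α ∈ Rad) :
    0 < ⟪α, α⟫ :=
  lt_of_le_of_ne real_inner_self_nonneg
    (fun h => hRS.nonzero α hα (inner_self_eq_zero.mp h.symm))

lemma sIso_image (hRS : IsRootSystem Rad) {α : V} (hα : α ∈ Rad) :
    ⇑(sIso α) '' Rad = Rad := by
  apply Set.Subset.antisymm
  · rintro _ ⟨β, hβ, rfl⟩
    rw [sIso_apply]; exact hRS.reflMem α hα β hβ
  · intro β hβ
    refine ⟨sIso α β, ?_, sIso_sIso α β⟩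
    rw [sIso_apply]; exact hRS.reflMem α hα β hβ

/-- The stabilizer of `Rad` in the isometry group. -/
def stab (Rad : Set V) : Subgroup (V ≃ₗᵢ[ℝ] V) where
  carrier := {g | ⇑g '' Rad = Rad}
  one_mem' := by simp [Set.image_id']
  mul_mem' := by
    intro a b ha hb
    have : ⇑(a * b) = ⇑a ∘ ⇑b := rfl
    simp only [Set.mem_setOf_eq] at *
    rw [this, Set.image_comp, hb, ha]
  inv_mem' := by
    intro a ha
    simp only [Set.mem_setOf_eq] at *
    conv_lhs => rw [← ha]
    rw [← Set.image_comp]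
    have : ⇑a⁻¹ ∘ ⇑a = id := by
      funext x; exact a.symm_apply_apply x
    rw [this, Set.image_id]

lemma mem_stab {g : V ≃ₗᵢ[ℝ] V} : g ∈ stab Rad ↔ ⇑g '' Rad = Rad := Iff.rfl

/-- The generating set of the Weyl group appearing in the theorem statement. -/
def gens (Rad : Set V) : Set (V ≃ₗᵢ[ℝ] V) :=
  {u : V ≃ₗᵢ[ℝ] V | ∃ α ∈ Rad, ∀ x : V, u x = reflRoot α x}

lemma sIso_mem_gens {α : V} (hα : α ∈ Rad) : sIso α ∈ gens Rad :=
  ⟨α, hα, fun x => sIso_apply α x⟩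

lemma gens_eq {u : V ≃ₗᵢ[ℝ] V} (hu : u ∈ gens Rad) : ∃ α ∈ Rad, u = sIso α := by
  obtain ⟨α, hα, h⟩ := hu
  exact ⟨α, hα, by ext x; rw [h x, sIso_apply]⟩

lemma weyl_le_stab (hRS : IsRootSystem Rad) : Subgroup.closure (gens Rad) ≤ stab Rad := by
  apply Subgroup.closure_le _ |>.mpr
  rintro u hu
  obtain ⟨α, hα, rfl⟩ := gens_eq hu
  exact sIso_image hRS hα

lemma stab_finite (hRS : IsRootSystem Rad) : Set.Finite {g : V ≃ₗᵢ[ℝ] V | ⇑g '' Rad = Rad} := by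
  have : Finite ↥Rad := hRS.finite.to_subtype
  set F : (V ≃ₗᵢ[ℝ] V) → (↥Rad → V) := fun g a => g a with hF
  apply Set.Finite.of_finite_image (f := F)
  · apply Set.Finite.subset (Set.Finite.pi (fun _ : ↥Rad => hRS.finite))
    rintro _ ⟨g, hg, rfl⟩
    intro a _
    show F g a ∈ Rad
    have : F g a ∈ ⇑g '' Rad := ⟨a, a.2, rfl⟩
    rwa [hg] at this
  · intro g hg g' hg' h
    have : ∀ x ∈ Rad, g x = g' x := fun x hx => congrFun h ⟨x, hx⟩
    have : (g : V →ₗ[ℝ] V) = (g' : V →ₗ[ℝ] V) := by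
      apply LinearMap.ext_on hRS.spanning
      intro x hx
      simpa using this x hx
    ext x
    exact congrArg (fun (m : V →ₗ[ℝ] V) => m x) this


lemma mem_of_image_eq {g : V ≃ₗᵢ[ℝ] V} (hg : ⇑g '' Rad = Rad) {α : V} (hα : α ∈ Rad) :
    g α ∈ Rad := by
  rw [← hg]; exact ⟨α, hα, rfl⟩

lemma symm_mem_of_image_eq {g : V ≃ₗᵢ[ℝ] V} (hg : ⇑g '' Rad = Rad) {α : V} (hα : α ∈ Rad) :
    g.symm α ∈ Rad := by
  rw [← hg] at hα
  obtain ⟨β, hβ, rfl⟩ := hα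
  rwa [g.symm_apply_apply]

lemma IsRegular.map {g : V ≃ₗᵢ[ℝ] V} (hg : ⇑g '' Rad = Rad) {v : V}
    (hv : IsRegular Rad v) : IsRegular Rad (g v) := by
  intro α hα
  have h1 : g (g.symm α) = α := g.apply_symm_apply α
  rw [← h1, LinearIsometryEquiv.inner_map_map]
  exact hv _ (symm_mem_of_image_eq hg hα)

lemma posRoots_map {g : V ≃ₗᵢ[ℝ] V} (hg : ⇑g '' Rad = Rad) (x : V) :
    ⇑g '' posRoots Rad x = posRoots Rad (g x) := by
  apply Set.Subset.antisymm
  · rintro _ ⟨α, ⟨hα, hpos⟩, rfl⟩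
    exact ⟨mem_of_image_eq hg hα, by rwa [LinearIsometryEquiv.inner_map_map]⟩
  · rintro β ⟨hβ, hpos⟩
    refine ⟨g.symm β, ⟨symm_mem_of_image_eq hg hβ, ?_⟩, g.apply_symm_apply β⟩
    have h1 : g (g.symm β) = β := g.apply_symm_apply β
    rw [← LinearIsometryEquiv.inner_map_map g (g.symm β) x, h1]
    exact hpos

/-- Transitivity of the Weyl group on positive systems. -/
lemma exists_weyl_posRoots_eq (hRS : IsRootSystem Rad) {v u : V}
    (hv : IsRegular Rad v) (hu : IsRegular Rad u) :
    ∃ w ∈ Subgroup.closure (gens Rad), posRoots Rad (w u) = posRoots Rad v := by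
  classical
  set W := Subgroup.closure (gens Rad) with hW
  have hWfin : Set.Finite (W : Set (V ≃ₗᵢ[ℝ] V)) :=
    (stab_finite hRS).subset (fun g hg => weyl_le_stab hRS hg)
  obtain ⟨w₀, hw₀W, hmax⟩ := Set.exists_max_image (W : Set (V ≃ₗᵢ[ℝ] V))
    (fun w => ⟪w u, v⟫) hWfin ⟨1, Subgroup.one_mem W⟩
  refine ⟨w₀, hw₀W, ?_⟩
  have hw₀stab : ⇑w₀ '' Rad = Rad := weyl_le_stab hRS hw₀W
  have hreg : IsRegular Rad (w₀ u) := hu.map hw₀stab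
  have hsub : ∀ α ∈ posRoots Rad v, 0 < ⟪α, w₀ u⟫ := by
    intro α ⟨hα, hαv⟩
    rcases lt_or_gt_of_ne (hreg α hα) with hneg | hpos
    · exfalso
      have hsw : sIso α * w₀ ∈ W :=
        W.mul_mem (Subgroup.subset_closure (sIso_mem_gens hα)) hw₀W
      have h2 : ⟪(sIso α * w₀) u, v⟫ = ⟪w₀ u, v⟫ - (2 * ⟪w₀ u, α⟫ / ⟪α, α⟫) * ⟪α, v⟫ := by
        show ⟪sIso α (w₀ u), v⟫ = _
        rw [sIso_apply, reflRoot, inner_sub_left, real_inner_smul_left]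
      have h3 : 2 * ⟪w₀ u, α⟫ / ⟪α, α⟫ < 0 := by
        apply div_neg_of_neg_of_pos _ (hRS.inner_self_pos hα)
        rw [real_inner_comm] at hneg
        linarith
      have h4 : ⟪w₀ u, v⟫ < ⟪(sIso α * w₀) u, v⟫ := by
        rw [h2]; nlinarith
      exact absurd (hmax _ hsw) (by simpa using h4)
    · exact hpos
  apply Set.Subset.antisymm
  · rintro α ⟨hα, hαu⟩
    refine ⟨hα, ?_⟩
    rcases lt_or_gt_of_ne (hv α hα) with hneg | hpos
    · exfalso
      have hnegmem : -α ∈ posRoots Rad v :=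
        ⟨hRS.neg_mem hα, by rw [inner_neg_left]; linarith⟩
      have := hsub _ hnegmem
      rw [inner_neg_left] at this
      linarith
    · exact hpos
  · intro α hα
    exact ⟨hα.1, hsub α hα⟩


/-- Strict Cauchy–Schwarz for non-proportional roots. -/
lemma inner_sq_lt (hRS : IsRootSystem Rad) {α β : V} (hα : α ∈ Rad) (hβ : β ∈ Rad)
    (h1 : α ≠ β) (h2 : α ≠ -β) : ⟪α, β⟫ ^ 2 < ⟪α, α⟫ * ⟪β, β⟫ := by
  have hb0 : β ≠ 0 := hRS.nonzero β hβ
  have hnb : 0 < ‖β‖ := norm_pos_iff.mpr hb0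
  have key : ∀ γ : V, γ ∈ Rad → γ ≠ β → ⟪γ, β⟫ < ‖γ‖ * ‖β‖ := by
    intro γ hγ hγβ
    apply inner_lt_norm_mul_iff_real.mpr
    intro h
    have hc : γ = (‖γ‖ / ‖β‖) • β := by
      have h3 := congrArg (fun x => (‖β‖)⁻¹ • x) h
      simp only [smul_smul, inv_mul_cancel₀ (ne_of_gt hnb), one_smul] at h3
      exact h3.trans (by rw [div_eq_mul_inv, mul_comm])
    have hγ0 : γ ≠ 0 := hRS.nonzero γ hγ
    have hnγ : 0 < ‖γ‖ := norm_pos_iff.mpr hγ0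
    rcases hRS.reduced β hβ (‖γ‖ / ‖β‖) (by rw [← hc]; exact hγ) with h' | h'
    · exact hγβ (by rw [hc, h', one_smul])
    · have : (0:ℝ) < ‖γ‖ / ‖β‖ := div_pos hnγ hnb
      rw [h'] at this; linarith
  have hA := key α hα h1
  have hB := key (-α) (hRS.neg_mem hα) (fun h => h2 (by rw [← h]; simp))
  rw [inner_neg_left, norm_neg] at hB
  have e1 : ⟪α, α⟫ = ‖α‖ * ‖α‖ := real_inner_self_eq_norm_mul_norm α
  have e2 : ⟪β, β⟫ = ‖β‖ * ‖β‖ := real_inner_self_eq_norm_mul_norm β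
  nlinarith [mul_pos (sub_pos.mpr hA) (by linarith : (0:ℝ) < ‖α‖ * ‖β‖ + ⟪α, β⟫)]

/-- If two distinct roots have positive inner product, their difference is a root. -/
lemma sub_mem_of_inner_pos (hRS : IsRootSystem Rad) {α β : V} (hα : α ∈ Rad) (hβ : β ∈ Rad)
    (hne : α ≠ β) (hip : 0 < ⟪α, β⟫) : α - β ∈ Rad := by
  obtain ⟨m, em⟩ := hRS.integral α hα β hβ
  obtain ⟨n, en⟩ := hRS.integral β hβ α hα
  have haa := hRS.inner_self_pos hα
  have hbb := hRS.inner_self_pos hβ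
  have em' : 2 * ⟪β, α⟫ = (m:ℝ) * ⟪α, α⟫ := by
    field_simp at em; linarith [em]
  have en' : 2 * ⟪α, β⟫ = (n:ℝ) * ⟪β, β⟫ := by
    field_simp at en; linarith [en]
  have hcomm : ⟪β, α⟫ = ⟪α, β⟫ := real_inner_comm α β
  have hm1 : (1:ℝ) ≤ (m:ℝ) := by
    have : (0:ℝ) < (m:ℝ) := by nlinarith
    exact_mod_cast (by exact_mod_cast this : (0:ℤ) < m)
  have hn1 : (1:ℝ) ≤ (n:ℝ) := by
    have : (0:ℝ) < (n:ℝ) := by nlinarith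
    exact_mod_cast (by exact_mod_cast this : (0:ℤ) < n)
  have hne2 : α ≠ -β := by
    intro h
    rw [h, inner_neg_left] at hip
    linarith
  have hCS : ⟪α, β⟫ ^ 2 < ⟪α, α⟫ * ⟪β, β⟫ := inner_sq_lt hRS hα hβ hne hne2
  have hmn : (m:ℝ) * (n:ℝ) < 4 := by
    have h4 : ((m:ℝ) * (n:ℝ)) * (⟪α, α⟫ * ⟪β, β⟫) = 4 * ⟪α, β⟫ ^ 2 := by
      nlinarith [em', en']
    nlinarith
  have : m = 1 ∨ n = 1 := by
    by_contra hcon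
    push_neg at hcon
    have hm2 : (2:ℝ) ≤ (m:ℝ) := by
      have : (1:ℤ) < m := lt_of_le_of_ne (by exact_mod_cast hm1) (Ne.symm hcon.1)
      exact_mod_cast this
    have hn2 : (2:ℝ) ≤ (n:ℝ) := by
      have : (1:ℤ) < n := lt_of_le_of_ne (by exact_mod_cast hn1) (Ne.symm hcon.2)
      exact_mod_cast this
    nlinarith
  rcases this with h | h
  · -- reflRoot β α? no: m = 1 : reflRoot α β = β - α
    have : reflRoot α β = β - α := by
      rw [reflRoot, em, h]
      push_cast
      module
    have hmem : β - α ∈ Rad := this ▸ hRS.reflMem α hα β hβ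
    have := hRS.neg_mem hmem
    rwa [neg_sub] at this
  · have : reflRoot β α = α - β := by
      rw [reflRoot, en, h]
      push_cast
      module
    exact this ▸ hRS.reflMem β hβ α hα


/-- Key lemma: the reflection in a simple root permutes the other positive roots. -/
lemma simple_reflRoot_pos (hRS : IsRootSystem Rad) {v : V} (hv : IsRegular Rad v)
    {α β : V} (hα : α ∈ simpleBase Rad v) (hβ : β ∈ posRoots Rad v) (hne : β ≠ α) :
    reflRoot α β ∈ posRoots Rad v := by
  obtain ⟨⟨hαR, hαv⟩, hsimple⟩ := hα
  obtain ⟨hβR, hβv⟩ := hβ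
  have hcontra : ∀ p q : V, p ∈ posRoots Rad v → q ∈ posRoots Rad v → α = p + q → False :=
    fun p q hp hq h => hsimple ⟨p, hp, q, hq, h⟩
  have hγR : reflRoot α β ∈ Rad := hRS.reflMem α hαR β hβR
  by_contra hcon
  have hγv : ⟪reflRoot α β, v⟫ < 0 := by
    rcases lt_or_gt_of_ne (hv _ hγR) with h | h
    · exact h
    · exact absurd ⟨hγR, h⟩ hcon
  obtain ⟨m, em⟩ := hRS.integral α hαR β hβR
  have haa := hRS.inner_self_pos hαR
  have hbb := hRS.inner_self_pos hβR
  have hγeq : reflRoot α β = β - (m:ℝ) • α := by rw [reflRoot, em]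
  have hγv' : ⟪β, v⟫ - (m:ℝ) * ⟪α, v⟫ < 0 := by
    rw [hγeq, inner_sub_left, real_inner_smul_left] at hγv
    exact hγv
  have hm0 : (0:ℝ) < (m:ℝ) := by nlinarith
  have hm1 : (1:ℤ) ≤ m := by exact_mod_cast (by exact_mod_cast hm0 : (0:ℤ) < m)
  have em' : 2 * ⟪β, α⟫ = (m:ℝ) * ⟪α, α⟫ := by
    field_simp at em; linarith [em]
  have hip : 0 < ⟪β, α⟫ := by nlinarith
  -- γ = m•α - β is a positive root
  have hγmem : (m:ℝ) • α - β ∈ Rad := by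
    have := hRS.neg_mem hγR
    rwa [hγeq, neg_sub] at this
  have hγpos : (m:ℝ) • α - β ∈ posRoots Rad v :=
    ⟨hγmem, by rw [inner_sub_left, real_inner_smul_left]; linarith⟩
  rcases eq_or_lt_of_le hm1 with hm | hm
  · -- m = 1
    refine hcontra β ((m:ℝ) • α - β) ⟨hβR, hβv⟩ hγpos ?_
    rw [← hm]; push_cast; module
  · -- m ≥ 2
    have hm2 : (2:ℤ) ≤ m := hm
    have hδR : β - α ∈ Rad :=
      sub_mem_of_inner_pos hRS hβR hαR hne hip
    rcases lt_or_gt_of_ne (hv _ hδR) with hδneg | hδpos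
    · -- α - β positive, α = β + (α - β)
      have hmem : α - β ∈ Rad := by
        have := hRS.neg_mem hδR; rwa [neg_sub] at this
      refine hcontra β (α - β) ⟨hβR, hβv⟩ ⟨hmem, ?_⟩ (by module)
      rw [inner_sub_left]
      rw [inner_sub_left] at hδneg
      linarith
    · -- δ = β - α positive
      have hδposR : β - α ∈ posRoots Rad v := ⟨hδR, hδpos⟩
      -- bound m ≤ 3
      obtain ⟨n, en⟩ := hRS.integral β hβR α hαR
      have en' : 2 * ⟪α, β⟫ = (n:ℝ) * ⟪β, β⟫ := by
        field_simp at en; linarith [en]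
      have hcomm : ⟪β, α⟫ = ⟪α, β⟫ := real_inner_comm α β
      have hn1 : (1:ℤ) ≤ n := by
        have : (0:ℝ) < (n:ℝ) := by nlinarith
        exact_mod_cast (by exact_mod_cast this : (0:ℤ) < n)
      have hne2 : β ≠ -α := by
        intro h
        rw [h, inner_neg_left] at hip
        linarith
      have hCS : ⟪β, α⟫ ^ 2 < ⟪β, β⟫ * ⟪α, α⟫ := inner_sq_lt hRS hβR hαR hne hne2
      have hmn : (m:ℝ) * (n:ℝ) < 4 := by
        have h4 : ((m:ℝ) * (n:ℝ)) * (⟪α, α⟫ * ⟪β, β⟫) = 4 * ⟪β, α⟫ ^ 2 := by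
          nlinarith [em', en']
        nlinarith
      have hm3 : m = 2 ∨ m = 3 := by
        have : (m:ℝ) * 1 ≤ (m:ℝ) * (n:ℝ) := by
          have : (1:ℝ) ≤ (n:ℝ) := by exact_mod_cast hn1
          nlinarith
        have : (m:ℝ) < 4 := by linarith
        have hm4 : m < 4 := by exact_mod_cast this
        omega
      rcases hm3 with hm' | hm'
      · -- m = 2 : α = (m•α - β) + (β - α)
        refine hcontra ((m:ℝ) • α - β) (β - α) hγpos hδposR ?_
        subst hm'; push_cast; module
      · -- m = 3
        subst hm'
        have hεR : reflRoot α (β - α) ∈ Rad := hRS.reflMem α hαR _ hδR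
        have hεeq : reflRoot α (β - α) = β - (2:ℝ) • α := by
          rw [reflRoot]
          have hc : 2 * ⟪β - α, α⟫ / ⟪α, α⟫ = 1 := by
            rw [inner_sub_left]
            push_cast at em'
            field_simp
            linarith
          rw [hc]
          module
        rw [hεeq] at hεR
        rcases lt_or_gt_of_ne (hv _ hεR) with hεneg | hεpos
        · -- 2α - β positive, α = (2α - β) + (β - α)
          have hmem : (2:ℝ) • α - β ∈ Rad := by
            have := hRS.neg_mem hεR; rwa [neg_sub] at this
          refine hcontra ((2:ℝ) • α - β) (β - α) ⟨hmem, ?_⟩ hδposR (by module)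
          rw [inner_sub_left, real_inner_smul_left]
          rw [inner_sub_left, real_inner_smul_left] at hεneg
          linarith
        · -- β - 2α positive, α = (β - 2α) + (3α - β)
          refine hcontra (β - (2:ℝ) • α) (((3:ℤ):ℝ) • α - β) ⟨hεR, hεpos⟩ hγpos ?_
          push_cast; module


lemma pos_mem_addClosure (hRS : IsRootSystem Rad) {v : V} (hv : IsRegular Rad v)
    {β : V} (hβ : β ∈ posRoots Rad v) :
    β ∈ AddSubmonoid.closure (simpleBase Rad v) := by
  classical
  by_contra hcon
  set S := {γ ∈ posRoots Rad v | γ ∉ AddSubmonoid.closure (simpleBase Rad v)} with hS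
  have hSfin : S.Finite := hRS.finite.subset (fun γ hγ => hγ.1.1)
  have hSne : S.Nonempty := ⟨β, hβ, hcon⟩
  obtain ⟨γ, hγS, hmin⟩ := Set.exists_min_image S (fun γ => ⟪γ, v⟫) hSfin hSne
  obtain ⟨⟨hγR, hγv⟩, hγcl⟩ := hγS
  by_cases hsimp : γ ∈ simpleBase Rad v
  · exact hγcl (AddSubmonoid.subset_closure hsimp)
  · have : ∃ p ∈ posRoots Rad v, ∃ q ∈ posRoots Rad v, γ = p + q := by
      by_contra h
      exact hsimp ⟨⟨hγR, hγv⟩, h⟩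
    obtain ⟨p, hp, q, hq, hpq⟩ := this
    have hpv : ⟪p, v⟫ < ⟪γ, v⟫ := by
      have : ⟪γ, v⟫ = ⟪p, v⟫ + ⟪q, v⟫ := by rw [hpq, inner_add_left]
      linarith [hq.2]
    have hqv : ⟪q, v⟫ < ⟪γ, v⟫ := by
      have : ⟪γ, v⟫ = ⟪p, v⟫ + ⟪q, v⟫ := by rw [hpq, inner_add_left]
      linarith [hp.2]
    have hpcl : p ∈ AddSubmonoid.closure (simpleBase Rad v) := by
      by_contra h
      exact absurd (hmin p ⟨hp, h⟩) (by simpa using hpv)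
    have hqcl : q ∈ AddSubmonoid.closure (simpleBase Rad v) := by
      by_contra h
      exact absurd (hmin q ⟨hq, h⟩) (by simpa using hqv)
    exact hγcl (hpq ▸ AddSubmonoid.add_mem _ hpcl hqcl)

lemma exists_simple_inner_pos (hRS : IsRootSystem Rad) {v : V} (hv : IsRegular Rad v)
    {β : V} (hβ : β ∈ posRoots Rad v) :
    ∃ α ∈ simpleBase Rad v, 0 < ⟪β, α⟫ := by
  by_contra hcon
  push_neg at hcon
  have key : ∀ x ∈ AddSubmonoid.closure (simpleBase Rad v), ⟪β, x⟫ ≤ 0 := by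
    intro x hx
    induction hx using AddSubmonoid.closure_induction with
    | mem y hy => exact hcon y hy
    | zero => simp
    | add y z _ _ hy hz => rw [inner_add_right]; linarith
  have h1 := key β (pos_mem_addClosure hRS hv hβ)
  have h2 := hRS.inner_self_pos hβ.1
  linarith

lemma simple_mem_gens {v : V} {α : V} (hα : α ∈ simpleBase Rad v) :
    sIso α ∈ (sIso '' simpleBase Rad v : Set (V ≃ₗᵢ[ℝ] V)) := ⟨α, hα, rfl⟩

/-- Every reflection lies in the subgroup generated by simple reflections. -/
lemma refl_mem_simpleClosure (hRS : IsRootSystem Rad) {v : V} (hv : IsRegular Rad v)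
    {β : V} (hβ : β ∈ Rad) :
    sIso β ∈ Subgroup.closure (sIso '' simpleBase Rad v : Set (V ≃ₗᵢ[ℝ] V)) := by
  classical
  set W' := Subgroup.closure (sIso '' simpleBase Rad v : Set (V ≃ₗᵢ[ℝ] V)) with hW'
  -- reduce to positive roots
  suffices h : ∀ γ ∈ posRoots Rad v, sIso γ ∈ W' by
    rcases lt_or_gt_of_ne (hv β hβ) with hneg | hpos
    · have : -β ∈ posRoots Rad v :=
        ⟨hRS.neg_mem hβ, by rw [inner_neg_left]; linarith⟩
      have := h _ this
      rwa [sIso_neg] at this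
    · exact h β ⟨hβ, hpos⟩
  by_contra hcon
  push_neg at hcon
  obtain ⟨δ, hδ, hδW⟩ := hcon
  set S := {γ ∈ posRoots Rad v | sIso γ ∉ W'} with hS
  have hSfin : S.Finite := hRS.finite.subset (fun γ hγ => hγ.1.1)
  obtain ⟨γ, hγS, hmin⟩ := Set.exists_min_image S (fun γ => ⟪γ, v⟫) hSfin ⟨δ, hδ, hδW⟩
  obtain ⟨hγpos, hγW⟩ := hγS
  obtain ⟨α, hαsimp, hαip⟩ := exists_simple_inner_pos hRS hv hγpos
  have hαR : α ∈ Rad := hαsimp.1.1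
  by_cases hγα : γ = α
  · exact hγW (hγα ▸ Subgroup.subset_closure (simple_mem_gens hαsimp))
  · have hγ' : reflRoot α γ ∈ posRoots Rad v := simple_reflRoot_pos hRS hv hαsimp hγpos hγα
    obtain ⟨m, em⟩ := hRS.integral α hαR γ hγpos.1
    have haa := hRS.inner_self_pos hαR
    have hm0 : (0:ℝ) < (m:ℝ) := by
      rw [← em]
      apply div_pos (by linarith) haa
    have hlt : ⟪reflRoot α γ, v⟫ < ⟪γ, v⟫ := by
      rw [reflRoot, em, inner_sub_left, real_inner_smul_left]
      nlinarith [hαsimp.1.2]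
    have hγ'W : sIso (reflRoot α γ) ∈ W' := by
      by_contra h
      exact absurd (hmin _ ⟨hγ', h⟩) (by simpa using hlt)
    have hγeq : γ = sIso α (reflRoot α γ) := by
      rw [← sIso_apply α γ, sIso_sIso]
    have : sIso γ = sIso α * sIso (reflRoot α γ) * (sIso α)⁻¹ := by
      rw [← sIso_conj (sIso α) (reflRoot α γ), ← hγeq]
    rw [this] at hγW
    have hαW : sIso α ∈ W' := Subgroup.subset_closure (simple_mem_gens hαsimp)
    exact hγW (W'.mul_mem (W'.mul_mem hαW hγ'W) (W'.inv_mem hαW))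


lemma coe_mul_apply (a b : V ≃ₗᵢ[ℝ] V) (x : V) : (a * b) x = a (b x) := rfl

lemma apply_inv_apply (a : V ≃ₗᵢ[ℝ] V) (x : V) : a⁻¹ (a x) = x := by
  have h : a⁻¹ * a = 1 := inv_mul_cancel a
  have := congrArg (fun (m : V ≃ₗᵢ[ℝ] V) => m x) h
  simpa [coe_mul_apply] using this

lemma listprod_stab (hRS : IsRootSystem Rad) {v : V} (L : List V)
    (hL : ∀ a ∈ L, a ∈ simpleBase Rad v) : (L.map sIso).prod ∈ stab Rad := by
  apply Subgroup.list_prod_mem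
  intro x hx
  obtain ⟨a, ha, rfl⟩ := List.mem_map.mp hx
  exact sIso_image hRS (hL a ha).1.1

/-- The deletion lemma. -/
lemma deletion (hRS : IsRootSystem Rad) {v : V} (hv : IsRegular Rad v) :
    ∀ L : List V, (∀ a ∈ L, a ∈ simpleBase Rad v) → ∀ α, α ∈ simpleBase Rad v →
      ⟪((L.map sIso).prod) α, v⟫ < 0 →
      ∃ L' : List V, (∀ a ∈ L', a ∈ simpleBase Rad v) ∧ L'.length + 1 = L.length ∧
        (L.map sIso).prod = (L'.map sIso).prod * sIso α := by
  intro L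
  induction L with
  | nil =>
    intro _ α hα hneg
    simp only [List.map_nil, List.prod_nil] at hneg
    have : (1 : V ≃ₗᵢ[ℝ] V) α = α := rfl
    rw [this] at hneg
    linarith [hα.1.2]
  | cons a L ih =>
    intro hmem α hα hneg
    have haS : a ∈ simpleBase Rad v := hmem a List.mem_cons_self
    have hLS : ∀ b ∈ L, b ∈ simpleBase Rad v := fun b hb => hmem b (List.mem_cons_of_mem a hb)
    have hprod : ((a :: L).map sIso).prod = sIso a * (L.map sIso).prod := by
      simp [List.map_cons, List.prod_cons]
    set β := ((L.map sIso).prod) α with hβ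
    have hβR : β ∈ Rad := mem_of_image_eq (listprod_stab hRS L hLS) hα.1.1
    have hcons : ((a :: L).map sIso).prod α = sIso a β := by
      rw [hprod, coe_mul_apply]
    rcases lt_or_gt_of_ne (hv β hβR) with hβneg | hβpos
    · obtain ⟨L', hL'S, hlen, heq⟩ := ih hLS α hα hβneg
      refine ⟨a :: L', fun b hb => ?_, by simp [← hlen], ?_⟩
      · rcases List.mem_cons.mp hb with h | h
        · exact h ▸ haS
        · exact hL'S b h
      · rw [hprod, heq]
        simp [List.map_cons, List.prod_cons, mul_assoc]
    · -- β is positive and sIso a β is negative, so β = a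
      have hβpos' : β ∈ posRoots Rad v := ⟨hβR, hβpos⟩
      have hβa : β = a := by
        by_contra h
        have := simple_reflRoot_pos hRS hv haS hβpos' h
        rw [← sIso_apply, ← hcons] at this
        linarith [this.2, hneg]
      -- sIso a = prodL * sIso α * prodL⁻¹
      have hconj : sIso a = (L.map sIso).prod * sIso α * ((L.map sIso).prod)⁻¹ := by
        rw [← sIso_conj ((L.map sIso).prod) α, ← hβ, hβa]
      refine ⟨L, hLS, by simp, ?_⟩
      rw [hprod, hconj]
      group

/-- A product of simple reflections fixing the positive system is the identity. -/
lemma prod_simple_fix_eq_one (hRS : IsRootSystem Rad) {v : V} (hv : IsRegular Rad v) :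
    ∀ n : ℕ, ∀ L : List V, L.length = n → (∀ a ∈ L, a ∈ simpleBase Rad v) →
      ⇑((L.map sIso).prod) '' posRoots Rad v = posRoots Rad v →
      (L.map sIso).prod = 1 := by
  intro n
  induction n using Nat.strong_induction_on with
  | _ n ih =>
    intro L hlen hLS hfix
    rcases List.eq_nil_or_concat L with rfl | ⟨L', b, rfl⟩
    · simp
    · simp only [List.concat_eq_append] at hlen hLS hfix ⊢
      have hbS : b ∈ simpleBase Rad v := hLS b (by simp)
      have hL'S : ∀ a ∈ L', a ∈ simpleBase Rad v := fun a ha => hLS a (by simp [ha])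
      have hprod : ((L' ++ [b]).map sIso).prod = (L'.map sIso).prod * sIso b := by
        simp [List.map_append, List.prod_append]
      have hσb : ((L' ++ [b]).map sIso).prod b ∈ posRoots Rad v := by
        rw [← hfix]
        exact ⟨b, hbS.1, rfl⟩
      have hb0 : b ≠ 0 := hRS.nonzero b hbS.1.1
      have hσbeq : ((L' ++ [b]).map sIso).prod b = -((L'.map sIso).prod b) := by
        rw [hprod, coe_mul_apply, sIso_apply, reflRoot_self hb0, map_neg]
      have hneg : ⟪((L'.map sIso).prod) b, v⟫ < 0 := by
        have h2 := hσb.2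
        rw [hσbeq, inner_neg_left] at h2
        linarith
      obtain ⟨L'', hL''S, hlen'', heq⟩ := deletion hRS hv L' hL'S b hbS hneg
      have hσeq : ((L' ++ [b]).map sIso).prod = (L''.map sIso).prod := by
        rw [hprod, heq, mul_assoc, sIso_mul_self, mul_one]
      have hlt : L''.length < n := by
        have h1 : L'.length + 1 = n := by simpa using hlen
        omega
      rw [hσeq]
      exact ih _ hlt L'' rfl hL''S (by rw [← hσeq]; exact hfix)

lemma exists_root_list {v : V} :
    ∀ l : List (V ≃ₗᵢ[ℝ] V), (∀ y ∈ l, y ∈ (sIso '' simpleBase Rad v : Set (V ≃ₗᵢ[ℝ] V))) →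
      ∃ L : List V, (∀ a ∈ L, a ∈ simpleBase Rad v) ∧ L.map sIso = l := by
  intro l
  induction l with
  | nil => exact fun _ => ⟨[], by simp, rfl⟩
  | cons y l ih =>
    intro h
    obtain ⟨a, ha, rfl⟩ := h y List.mem_cons_self
    obtain ⟨L, hL, rfl⟩ := ih (fun z hz => h z (List.mem_cons_of_mem _ hz))
    exact ⟨a :: L, fun b hb => by
      rcases List.mem_cons.mp hb with h' | h'
      · exact h' ▸ ha
      · exact hL b h', rfl⟩

/-- Simple transitivity: a Weyl group element fixing the positive system is the identity. -/
lemma weyl_fix_eq_one (hRS : IsRootSystem Rad) {v : V} (hv : IsRegular Rad v)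
    {σ : V ≃ₗᵢ[ℝ] V} (hσ : σ ∈ Subgroup.closure (gens Rad))
    (hfix : ⇑σ '' posRoots Rad v = posRoots Rad v) : σ = 1 := by
  classical
  have hle : Subgroup.closure (gens Rad) ≤
      Subgroup.closure (sIso '' simpleBase Rad v : Set (V ≃ₗᵢ[ℝ] V)) := by
    apply Subgroup.closure_le _ |>.mpr
    intro u hu
    obtain ⟨β, hβ, rfl⟩ := gens_eq hu
    exact refl_mem_simpleClosure hRS hv hβ
  have hW' : σ ∈ Subgroup.closure (sIso '' simpleBase Rad v : Set (V ≃ₗᵢ[ℝ] V)) := hle hσ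
  have hmono : σ ∈ Submonoid.closure (sIso '' simpleBase Rad v : Set (V ≃ₗᵢ[ℝ] V)) := by
    have h1 : σ ∈ (Subgroup.closure
        (sIso '' simpleBase Rad v : Set (V ≃ₗᵢ[ℝ] V))).toSubmonoid := hW'
    rw [Subgroup.closure_toSubmonoid] at h1
    refine Submonoid.closure_mono ?_ h1
    intro x hx
    rcases hx with h | h
    · exact h
    · rw [Set.mem_inv] at h
      obtain ⟨α, hα, hxeq⟩ := h
      have hx' : x = sIso α := by
        rw [← inv_inv x, ← hxeq, sIso_inv]
      exact hx' ▸ ⟨α, hα, rfl⟩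
  obtain ⟨l, hl, hlprod⟩ := Submonoid.exists_list_of_mem_closure hmono
  obtain ⟨L, hLS, hLmap⟩ := exists_root_list l hl
  have := prod_simple_fix_eq_one hRS hv L.length L rfl hLS (by rw [hLmap, hlprod]; exact hfix)
  rw [hLmap, hlprod] at this
  exact this


lemma apply_apply_inv (a : V ≃ₗᵢ[ℝ] V) (x : V) : a (a⁻¹ x) = x := by
  have := apply_inv_apply a⁻¹ x
  rwa [inv_inv] at this

lemma image_inv_eq {g : V ≃ₗᵢ[ℝ] V} {P : Set V} (h : ⇑g '' P = P) : ⇑g⁻¹ '' P = P := by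
  conv_lhs => rw [← h]
  rw [← Set.image_comp]
  have hid : ⇑g⁻¹ ∘ ⇑g = id := funext (apply_inv_apply g)
  rw [hid, Set.image_id]

theorem stmt17' (hRS : IsRootSystem Rad)
    (v : V) (hreg : IsRegular Rad v)
    (f : V ≃ₗᵢ[ℝ] V) (hf : (⇑f) '' Rad = Rad) :
    ∃ w g : V ≃ₗᵢ[ℝ] V,
      w ∈ Subgroup.closure (gens Rad) ∧
      (⇑g) '' Rad = Rad ∧ (⇑g) '' posRoots Rad v = posRoots Rad v ∧
      (∀ x : V, f x = w (g x)) ∧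
      (∀ w' g' : V ≃ₗᵢ[ℝ] V,
        w' ∈ Subgroup.closure (gens Rad) →
        (⇑g') '' Rad = Rad → (⇑g') '' posRoots Rad v = posRoots Rad v →
        (∀ x : V, f x = w' (g' x)) → w' = w ∧ g' = g) := by
  classical
  have hu : IsRegular Rad (f v) := hreg.map hf
  obtain ⟨w₀, hw₀W, hw₀pos⟩ := exists_weyl_posRoots_eq hRS hreg hu
  have hw₀stab : ⇑w₀ '' Rad = Rad := weyl_le_stab hRS hw₀W
  have hgfun : ⇑(w₀ * f) = ⇑w₀ ∘ ⇑f := rfl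
  have hgRad : ⇑(w₀ * f) '' Rad = Rad := by
    rw [hgfun, Set.image_comp, hf, hw₀stab]
  have hgpos : ⇑(w₀ * f) '' posRoots Rad v = posRoots Rad v := by
    rw [hgfun, Set.image_comp, posRoots_map hf v, posRoots_map hw₀stab (f v)]
    exact hw₀pos
  have hfac₀ : ∀ x : V, f x = w₀⁻¹ ((w₀ * f) x) := fun x =>
    (apply_inv_apply w₀ (f x)).symm
  refine ⟨w₀⁻¹, w₀ * f, Subgroup.inv_mem _ hw₀W, hgRad, hgpos, hfac₀, ?_⟩
  intro w' g' hw' hg'Rad hg'pos hfac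
  have hσfun : ∀ y : V, (w₀ * w') y = (w₀ * f) (g'⁻¹ y) := by
    intro y
    have h1 : g' (g'⁻¹ y) = y := apply_apply_inv g' y
    have h2 := hfac (g'⁻¹ y)
    rw [h1] at h2
    show w₀ (w' y) = w₀ (f (g'⁻¹ y))
    rw [h2]
  have hσpos : ⇑(w₀ * w') '' posRoots Rad v = posRoots Rad v := by
    rw [show ⇑(w₀ * w') = ⇑(w₀ * f) ∘ ⇑g'⁻¹ from funext hσfun, Set.image_comp,
      image_inv_eq hg'pos, hgpos]
  have hσ1 : w₀ * w' = 1 :=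
    weyl_fix_eq_one hRS hreg (Subgroup.mul_mem _ hw₀W hw') hσpos
  have hw'eq : w' = w₀⁻¹ := eq_inv_of_mul_eq_one_right hσ1
  constructor
  · exact hw'eq
  · ext x
    have h3 := hfac x
    rw [hw'eq] at h3
    have : w₀ (f x) = w₀ (w₀⁻¹ (g' x)) := congrArg w₀ h3
    rw [apply_apply_inv] at this
    exact this.symm

end Aux

/-- the full automorphism group of a root system is the semidirect product
of the Weyl group with the stabilizer of a positive system: every automorphism `f`
factors uniquely as `f = w ∘ g` with `w` in the Weyl group and `g` an automorphism
preserving `R⁺(v)`. -/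
theorem stmt17 {V : Type*} [NormedAddCommGroup V] [InnerProductSpace ℝ V]
    [FiniteDimensional ℝ V] (Rad : Set V) (hRS : IsRootSystem Rad)
    (v : V) (hreg : IsRegular Rad v)
    (f : V ≃ₗᵢ[ℝ] V) (hf : (⇑f) '' Rad = Rad) :
    ∃ w g : V ≃ₗᵢ[ℝ] V,
      w ∈ Subgroup.closure {u : V ≃ₗᵢ[ℝ] V | ∃ α ∈ Rad, ∀ x : V, u x = reflRoot α x} ∧
      (⇑g) '' Rad = Rad ∧ (⇑g) '' posRoots Rad v = posRoots Rad v ∧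
      (∀ x : V, f x = w (g x)) ∧
      (∀ w' g' : V ≃ₗᵢ[ℝ] V,
        w' ∈ Subgroup.closure {u : V ≃ₗᵢ[ℝ] V | ∃ α ∈ Rad, ∀ x : V, u x = reflRoot α x} →
        (⇑g') '' Rad = Rad → (⇑g') '' posRoots Rad v = posRoots Rad v →
        (∀ x : V, f x = w' (g' x)) → w' = w ∧ g' = g) := by
  exact stmt17' hRS v hreg f hf

end PaperRS
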